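/- Let f : S → E be a strictly increasing function from a set of epsilon numbers into the epsilon numbers, let α ∈ S be an epsilon number, and let x be an ordinal with Ep(x) ⊆ S. Let α⁺ denote the least epsilon number greater than α, and similarly f(α)⁺ the least epsilon number greater than f(α). Then x ∈ [α, α⁺) if and only if x[f] ∈ [f(α), f(α)⁺). -/

import Mathlib

open Ordinal

/-- An ordinal is an epsilon number if it is a fixed point of `ω ^ ·`. -/
def IsEpsilon (x : Ordinal.{0}) : Prop := ω ^ x = x

theorem cnf_fst_lt {x : Ordinal.{0}} (h : ¬ ω ^ x = x) {p : Ordinal × Ordinal}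
    (hp : p ∈ CNF ω x) : p.1 < x := by
  have hx : x ≠ 0 := by
    rintro rfl
    simp [Ordinal.CNF.zero_right] at hp
  have h1 : p.1 ≤ Ordinal.log ω x := Ordinal.CNF.fst_le_log hp
  have h2 : Ordinal.log ω x < x := by
    rcases lt_or_eq_of_le (Ordinal.log_le_self ω x) with h' | h'
    · exact h'
    · exfalso
      have hle := Ordinal.opow_log_le_self ω hx
      rw [h'] at hle
      exact h (le_antisymm hle (Ordinal.right_le_opow x one_lt_omega0))
  exact lt_of_le_of_lt h1 h2

open scoped Classical in
/-- The set of epsilon numbers occurring hereditarily in the Cantor normal form of `x`. -/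
noncomputable def Ep (x : Ordinal.{0}) : Set Ordinal.{0} :=
  if h : ω ^ x = x then {x}
  else ⋃ p : {q // q ∈ CNF ω x}, Ep p.1.1
termination_by x
decreasing_by exact cnf_fst_lt h p.2

open scoped Classical in
/-- Simultaneous substitution of the epsilon numbers occurring hereditarily in the
Cantor normal form of `x` by their values under `f`. -/
noncomputable def subst (f : Ordinal.{0} → Ordinal.{0}) (x : Ordinal.{0}) : Ordinal.{0} :=
  if h : ω ^ x = x then f x
  else (((CNF ω x).attach).map (fun p => ω ^ subst f p.1.1 * p.1.2)).sum
termination_by x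
decreasing_by exact cnf_fst_lt h p.2


theorem Ep_eps {x : Ordinal.{0}} (h : ω ^ x = x) : Ep x = {x} := by
  rw [Ep.eq_def]; simp [h]

theorem Ep_not_eps {x : Ordinal.{0}} (h : ¬ ω ^ x = x) :
    Ep x = ⋃ p : {q // q ∈ CNF ω x}, Ep p.1.1 := by
  rw [Ep.eq_def]; simp [h]

theorem subst_eps {f : Ordinal.{0} → Ordinal.{0}} {x : Ordinal.{0}} (h : ω ^ x = x) :
    subst f x = f x := by
  rw [subst.eq_def]; simp [h]

theorem subst_not_eps {f : Ordinal.{0} → Ordinal.{0}} {x : Ordinal.{0}} (h : ¬ ω ^ x = x) :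
    subst f x = (((CNF ω x).attach).map (fun p => ω ^ subst f p.1.1 * p.1.2)).sum := by
  rw [subst.eq_def]; simp [h]

theorem Ep_sub {x : Ordinal.{0}} (h : ¬ ω ^ x = x) {p : Ordinal × Ordinal}
    (hp : p ∈ CNF ω x) : Ep p.1 ⊆ Ep x := by
  rw [Ep_not_eps h]
  exact Set.subset_iUnion (fun q : {q // q ∈ CNF ω x} => Ep q.1.1) ⟨p, hp⟩

theorem mem_Ep_le : ∀ x : Ordinal.{0}, ∀ e ∈ Ep x, e ≤ x := by
  intro x
  induction x using Ordinal.induction with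
  | h x IH =>
    intro e he
    by_cases h : ω ^ x = x
    · rw [Ep_eps h] at he; simp only [Set.mem_singleton_iff] at he; exact he.le
    · rw [Ep_not_eps h] at he
      obtain ⟨p, hp⟩ := Set.mem_iUnion.1 he
      exact le_of_lt (lt_of_le_of_lt (IH _ (cnf_fst_lt h p.2) e hp) (cnf_fst_lt h p.2))

theorem eps_pos {γ : Ordinal.{0}} (hγ : ω ^ γ = γ) : 0 < γ := by
  rcases eq_zero_or_pos γ with h | h
  · subst h; simp at hγ
  · exact h

theorem eps_succ_le {γ e : Ordinal.{0}} (hγ : ω ^ γ = γ) (he : e < γ) :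
    ω ^ (e + 1) ≤ γ := by
  calc ω ^ (e + 1) ≤ ω ^ γ :=
        Ordinal.opow_le_opow_right omega0_pos (Order.add_one_le_iff.2 he)
    _ = γ := hγ

theorem lt_of_Ep_lt {γ : Ordinal.{0}} (hγ : ω ^ γ = γ) :
    ∀ x : Ordinal.{0}, (∀ e ∈ Ep x, e < γ) → x < γ := by
  intro x
  induction x using Ordinal.induction with
  | h x IH =>
    intro hall
    by_cases h : ω ^ x = x
    · exact hall x (by rw [Ep_eps h]; rfl)
    · rcases eq_zero_or_pos x with rfl | hx0
      · exact eps_pos hγ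
      have hmem : (Ordinal.log ω x, x / ω ^ Ordinal.log ω x) ∈ CNF ω x := by
        rw [Ordinal.CNF.ne_zero hx0.ne']
        exact List.mem_cons_self
      have hlog : Ordinal.log ω x < γ := by
        refine IH _ (cnf_fst_lt h hmem) (fun e he => hall e ?_)
        exact Ep_sub h hmem he
      calc x < ω ^ (Ordinal.log ω x + 1) := by
              simpa using Ordinal.lt_opow_succ_log_self one_lt_omega0 x
        _ ≤ γ := eps_succ_le hγ hlog

theorem list_sum_lt {γ : Ordinal.{0}} (hγ : ω ^ γ = γ) :
    ∀ l : List Ordinal.{0}, (∀ a ∈ l, a < γ) → l.sum < γ := by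
  intro l
  induction l with
  | nil => intro _; simpa using eps_pos hγ
  | cons a l IH =>
    intro hall
    rw [List.sum_cons]
    have := Ordinal.principal_add_omega0_opow γ (a := a) (b := l.sum)
    rw [hγ] at this
    exact this (hall a (by simp)) (IH fun b hb => hall b (by simp [hb]))

theorem subst_lt {f : Ordinal.{0} → Ordinal.{0}} {γ : Ordinal.{0}} (hγ : ω ^ γ = γ) :
    ∀ x : Ordinal.{0}, (∀ e ∈ Ep x, f e < γ) → subst f x < γ := by
  intro x
  induction x using Ordinal.induction with
  | h x IH =>
    intro hall
    by_cases h : ω ^ x = x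
    · rw [subst_eps h]
      exact hall x (by rw [Ep_eps h]; rfl)
    · rw [subst_not_eps h]
      refine list_sum_lt hγ _ ?_
      intro a ha
      simp only [List.mem_map, List.mem_attach, true_and] at ha
      obtain ⟨⟨p, hp⟩, rfl⟩ := ha
      have hs : subst f p.1 < γ :=
        IH _ (cnf_fst_lt h hp) (fun e he => hall e (Ep_sub h hp he))
      calc ω ^ subst f p.1 * p.2 < ω ^ subst f p.1 * ω :=
            mul_lt_mul_of_pos_left (Ordinal.CNF.snd_lt one_lt_omega0 hp)
              (Ordinal.opow_pos _ omega0_pos)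
        _ = ω ^ (subst f p.1 + 1) := by rw [Ordinal.opow_add, Ordinal.opow_one]
        _ ≤ γ := eps_succ_le hγ hs

theorem mem_le_list_sum : ∀ l : List Ordinal.{0}, ∀ a ∈ l, a ≤ l.sum := by
  intro l
  induction l with
  | nil => intro a ha; simp at ha
  | cons b l IH =>
    intro a ha
    rw [List.sum_cons]
    rcases List.mem_cons.1 ha with rfl | ha
    · exact le_self_add
    · exact (IH a ha).trans le_add_self

theorem le_subst {f : Ordinal.{0} → Ordinal.{0}} :
    ∀ x : Ordinal.{0}, ∀ e ∈ Ep x, f e ≤ subst f x := by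
  intro x
  induction x using Ordinal.induction with
  | h x IH =>
    intro e he
    by_cases h : ω ^ x = x
    · rw [Ep_eps h] at he
      rw [subst_eps h]
      rw [Set.mem_singleton_iff] at he
      rw [he]
    · rw [Ep_not_eps h] at he
      obtain ⟨⟨p, hp⟩, hpe⟩ := Set.mem_iUnion.1 he
      rw [subst_not_eps h]
      calc f e ≤ subst f p.1 := IH _ (cnf_fst_lt h hp) e hpe
        _ ≤ ω ^ subst f p.1 := (Ordinal.right_le_opow _ one_lt_omega0)
        _ ≤ ω ^ subst f p.1 * p.2 := Ordinal.le_mul_left _ (Ordinal.CNF.snd_pos hp)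
        _ ≤ _ := mem_le_list_sum _ _
              (List.mem_map.2 ⟨⟨p, hp⟩, List.mem_attach _ _, rfl⟩)

theorem stmt5 (S : Set Ordinal.{0}) (f : Ordinal → Ordinal)
    (hS : ∀ e ∈ S, IsEpsilon e) (hfE : ∀ e ∈ S, IsEpsilon (f e))
    (hf : StrictMonoOn f S)
    (α : Ordinal) (hα : α ∈ S)
    (x : Ordinal) (hx : Ep x ⊆ S) :
    (α ≤ x ∧ x < sInf {e | IsEpsilon e ∧ α < e}) ↔
      (f α ≤ subst f x ∧ subst f x < sInf {e | IsEpsilon e ∧ f α < e}) := by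
  have exA : ∀ β : Ordinal.{0}, ∃ γ, IsEpsilon γ ∧ β < γ := by
    intro β
    refine ⟨nfp (fun a => ω ^ a) (β + 1), ?_, ?_⟩
    · exact Ordinal.nfp_fp (Ordinal.isNormal_opow one_lt_omega0) _
    · exact lt_of_lt_of_le (lt_add_one β) (Ordinal.le_nfp _ _)
  set A := sInf {e | IsEpsilon e ∧ α < e} with hAdef
  set B := sInf {e | IsEpsilon e ∧ f α < e} with hBdef
  have hA : IsEpsilon A ∧ α < A := csInf_mem (exA α)
  have hB : IsEpsilon B ∧ f α < B := csInf_mem (exA (f α))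
  have hAmin : ∀ e, IsEpsilon e → α < e → A ≤ e := fun e h1 h2 => csInf_le' ⟨h1, h2⟩
  have hBmin : ∀ e, IsEpsilon e → f α < e → B ≤ e := fun e h1 h2 => csInf_le' ⟨h1, h2⟩
  have hαe : ω ^ α = α := hS α hα
  have hfαe : ω ^ (f α) = f α := hfE α hα
  have hmono : MonotoneOn f S := hf.monotoneOn
  constructor
  · rintro ⟨h1, h2⟩
    constructor
    · have hex : ∃ e ∈ Ep x, α ≤ e := by
        by_contra hc
        push_neg at hc
        exact absurd (lt_of_Ep_lt hαe x hc) (not_lt.2 h1)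
      obtain ⟨e, he, hae⟩ := hex
      exact (hmono hα (hx he) hae).trans (le_subst x e he)
    · refine subst_lt hB.1 x ?_
      intro e he
      have heS := hx he
      have heps := hS e heS
      have hlt : e ≤ α := by
        by_contra hc
        exact absurd ((hAmin e heps (not_le.1 hc)).trans (mem_Ep_le x e he)) (not_le.2 h2)
      exact lt_of_le_of_lt (hmono heS hα hlt) hB.2
  · rintro ⟨h1, h2⟩
    constructor
    · by_contra hc
      push_neg at hc
      have : subst f x < f α := subst_lt hfαe x (fun e he =>
        hf (hx he) hα (lt_of_le_of_lt (mem_Ep_le x e he) hc))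
      exact absurd h1 (not_le.2 this)
    · by_contra hc
      push_neg at hc
      have hex : ∃ e ∈ Ep x, ¬ e < A := by
        by_contra hc2
        push_neg at hc2
        exact absurd (lt_of_Ep_lt hA.1 x hc2) (not_lt.2 hc)
      obtain ⟨e, he, hAe⟩ := hex
      have heS := hx he
      have hαe' : α < e := lt_of_lt_of_le hA.2 (not_lt.1 hAe)
      have : B ≤ subst f x :=
        (hBmin (f e) (hfE e heS) (hf hα heS hαe')).trans (le_subst x e he)
      exact absurd h2 (not_lt.2 this)
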